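/- Call a subspace L ⊆ Im(𝕆) isotropic for λ if λ(a,b,c) = 0 for all a,b,c ∈ L, where λ(a,b,c) = ([a,b],c). Then every isotropic subspace of Im(𝕆) has dimension at most 4. -/

import Mathlib

noncomputable section

/-- The octonions, realized via the Cayley–Dickson construction as pairs of quaternions. -/
abbrev Octo : Type := Quaternion ℝ × Quaternion ℝ

namespace Octo

/-- Octonion multiplication (Cayley–Dickson): `(a,b)(c,d) = (ac - d̄b, da + bc̄)`. -/
def omul (x y : Octo) : Octo :=
  (x.1 * y.1 - star y.2 * x.2, y.2 * x.1 + x.2 * star y.1)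

/-- The octonion unit. -/
def oone : Octo := (1, 0)

/-- Octonion conjugation. -/
def oconj (x : Octo) : Octo := (star x.1, -x.2)

/-- Real part of an octonion. -/
def ore (x : Octo) : ℝ := x.1.re

/-- The standard inner product `(x,y) = re (x * ȳ)`. -/
def oinner (x y : Octo) : ℝ := ore (omul x (oconj y))

/-- An octonion is pure imaginary if `x̄ = -x`. -/
def IsIm (x : Octo) : Prop := oconj x = -x

/-- The commutator `[a,b] = a*b - b*a`. -/
def comm (a b : Octo) : Octo := omul a b - omul b a

/-- The octonionic vector (cross) product on imaginary octonions: half the commutator. -/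
def cross (a b : Octo) : Octo := (1/2 : ℝ) • comm a b

/-- The 3-form `λ(a,b,c) = ([a,b],c)`. -/
def lam (a b c : Octo) : ℝ := oinner (comm a b) c

attribute [local simp] oinner ore omul oconj comm
  Quaternion.re_mul Quaternion.imI_mul Quaternion.imJ_mul Quaternion.imK_mul
  Quaternion.re_zero Quaternion.imI_zero Quaternion.imJ_zero Quaternion.imK_zero

theorem isIm_iff (x : Octo) : IsIm x ↔ x.1.re = 0 := by
  constructor
  · intro h
    have := congrArg (fun z : Octo => z.1.re) h
    simp at this; linarith
  · intro h
    unfold IsIm oconj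
    refine Prod.ext ?_ (by simp)
    ext <;> simp [h]

theorem oinner_self (x : Octo) : oinner x x =
    x.1.re^2 + x.1.imI^2 + x.1.imJ^2 + x.1.imK^2 +
    x.2.re^2 + x.2.imI^2 + x.2.imJ^2 + x.2.imK^2 := by
  simp; ring

theorem oinner_self_eq_zero {x : Octo} (h : oinner x x = 0) : x = 0 := by
  rw [oinner_self] at h
  refine Prod.ext ?_ ?_ <;> ext <;>
    · simp only [Prod.fst_zero, Prod.snd_zero, Quaternion.re_zero, Quaternion.imI_zero,
        Quaternion.imJ_zero, Quaternion.imK_zero]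
      nlinarith [sq_nonneg x.1.re, sq_nonneg x.1.imI, sq_nonneg x.1.imJ, sq_nonneg x.1.imK,
        sq_nonneg x.2.re, sq_nonneg x.2.imI, sq_nonneg x.2.imJ, sq_nonneg x.2.imK]

/-- The composition-algebra identity: for imaginary `x, y`,
`|[x,y]|² = 4 (|x|²|y|² - (x,y)²)`. -/
theorem oinner_comm_self (x y : Octo) (hx : x.1.re = 0) (hy : y.1.re = 0) :
    oinner (comm x y) (comm x y) =
      4 * (oinner x x * oinner y y - (oinner x y)^2) := by
  simp [hx, hy]; ring

theorem oinner_add_left (x y z : Octo) : oinner (x + y) z = oinner x z + oinner y z := by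
  simp; ring
theorem oinner_smul_left (r : ℝ) (x z : Octo) : oinner (r • x) z = r * oinner x z := by
  simp; ring
theorem oinner_add_right (x y z : Octo) : oinner x (y + z) = oinner x y + oinner x z := by
  simp; ring
theorem oinner_smul_right (r : ℝ) (x z : Octo) : oinner x (r • z) = r * oinner x z := by
  simp; ring
theorem comm_re (a b : Octo) : (comm a b).1.re = 0 := by simp; ring

theorem omul_add_right' (a x y : Octo) : omul a (x + y) = omul a x + omul a y := by
  unfold omul
  refine Prod.ext ?_ ?_ <;>
    simp only [Prod.fst_add, Prod.snd_add, star_add, add_mul, mul_add] <;> abel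

theorem omul_add_left' (a x y : Octo) : omul (x + y) a = omul x a + omul y a := by
  unfold omul
  refine Prod.ext ?_ ?_ <;>
    simp only [Prod.fst_add, Prod.snd_add, star_add, add_mul, mul_add] <;> abel

theorem omul_smul_right' (a : Octo) (r : ℝ) (x : Octo) : omul a (r • x) = r • omul a x := by
  unfold omul
  refine Prod.ext ?_ ?_ <;>
    simp only [Prod.smul_fst, Prod.smul_snd, Quaternion.star_smul, smul_mul_assoc,
      mul_smul_comm, smul_sub, smul_add]

theorem omul_smul_left' (a : Octo) (r : ℝ) (x : Octo) : omul (r • x) a = r • omul x a := by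
  unfold omul
  refine Prod.ext ?_ ?_ <;>
    simp only [Prod.smul_fst, Prod.smul_snd, Quaternion.star_smul, smul_mul_assoc,
      mul_smul_comm, smul_sub, smul_add]

theorem comm_add_right' (a x y : Octo) : comm a (x + y) = comm a x + comm a y := by
  simp only [comm, omul_add_right', omul_add_left']; abel

theorem comm_smul_right' (a : Octo) (r : ℝ) (x : Octo) : comm a (r • x) = r • comm a x := by
  simp only [comm, omul_smul_right', omul_smul_left', smul_sub]

theorem comm_self' (a : Octo) : comm a a = 0 := by unfold comm; simp

/-- `x ↦ [a,x]` as a linear map. -/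
def commL (a : Octo) : Octo →ₗ[ℝ] Octo where
  toFun := comm a
  map_add' := comm_add_right' a
  map_smul' := fun r x => comm_smul_right' a r x

/-- The real part `x ↦ re x` as a linear map. -/
def reL : Octo →ₗ[ℝ] ℝ where
  toFun x := x.1.re
  map_add' := by intro x y; simp
  map_smul' := by intro r x; simp

/-- `x ↦ (x, c)` as a linear map. -/
def oinnerL (c : Octo) : Octo →ₗ[ℝ] ℝ where
  toFun x := oinner x c
  map_add' := fun x y => oinner_add_left x y c
  map_smul' := fun r x => oinner_smul_left r x c

end Octo
open Octo in
/-- Every subspace of `Im 𝕆` on which `λ(a,b,c) = ([a,b],c)` vanishes identically has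
dimension at most 4. -/
theorem isotropic_dim_le_four (L : Submodule ℝ Octo)
    (him : ∀ x ∈ L, IsIm x)
    (hiso : ∀ a ∈ L, ∀ b ∈ L, ∀ c ∈ L, lam a b c = 0) :
    Module.finrank ℝ L ≤ 4 := by
  classical
  by_cases hL : L = ⊥
  · subst hL; simp
  obtain ⟨a, haL, ha0⟩ := Submodule.exists_mem_ne_zero_of_ne_bot hL
  have haIm : a.1.re = 0 := (isIm_iff a).mp (him a haL)
  have haa : oinner a a ≠ 0 := fun h => ha0 (oinner_self_eq_zero h)
  -- the ambient space
  have hOcto : Module.finrank ℝ Octo = 8 := by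
    rw [Module.finrank_prod, Quaternion.finrank_eq_four]
  -- Im 𝕆 as a submodule
  set Im : Submodule ℝ Octo := LinearMap.ker reL with hIm
  have hImLt : Im < ⊤ := by
    rw [lt_top_iff_ne_top]
    intro h
    have : oone ∈ Im := h ▸ Submodule.mem_top
    simp [hIm, LinearMap.mem_ker, reL, oone, LinearMap.coe_mk, AddHom.coe_mk] at this
    exact one_ne_zero (α := ℝ) this
  have hImrank : Module.finrank ℝ Im ≤ 7 := by
    have := Submodule.finrank_lt (K := ℝ) (V := Octo) hImLt.ne
    omega
  -- W = Im ∩ L^⊥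
  set W : Submodule ℝ Octo := Im ⊓ ⨅ c : L, LinearMap.ker (oinnerL (c : Octo)) with hW
  have hWmem : ∀ x : Octo, x ∈ W ↔ x.1.re = 0 ∧ ∀ c ∈ L, oinner x c = 0 := by
    intro x
    simp only [hW, Submodule.mem_inf, Submodule.mem_iInf, LinearMap.mem_ker, hIm]
    constructor
    · rintro ⟨h1, h2⟩
      exact ⟨h1, fun c hc => h2 ⟨c, hc⟩⟩
    · rintro ⟨h1, h2⟩
      exact ⟨h1, fun c => h2 c c.2⟩
  -- L ∩ W = ⊥
  have hdisj : L ⊓ W = ⊥ := by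
    rw [Submodule.eq_bot_iff]
    rintro x ⟨hxL, hxW⟩
    exact oinner_self_eq_zero (((hWmem x).mp hxW).2 x hxL)
  -- L ⊔ W ⊆ Im
  have hsup : L ⊔ W ≤ Im := by
    refine sup_le ?_ inf_le_left
    intro x hx
    exact (isIm_iff x).mp (him x hx)
  have hLW : Module.finrank ℝ L + Module.finrank ℝ W ≤ 7 := by
    have h1 := Submodule.finrank_sup_add_finrank_inf_eq L W
    rw [hdisj] at h1
    have h2 : Module.finrank ℝ ↥(L ⊔ W) ≤ Module.finrank ℝ Im :=
      Submodule.finrank_mono hsup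
    simp at h1
    omega
  -- the linear map b ↦ [a, b] on L
  set f : L →ₗ[ℝ] Octo := (commL a).comp L.subtype with hf
  -- kernel is contained in the span of a
  have hker : ∀ b : L, f b = 0 → (b : Octo) ∈ Submodule.span ℝ {a} := by
    intro b hb
    have hbIm : (b : Octo).1.re = 0 := (isIm_iff _).mp (him _ b.2)
    have hcb : comm a (b : Octo) = 0 := hb
    set t : ℝ := oinner a b / oinner a a with ht
    set b' : Octo := (b : Octo) - t • a with hb'
    have h1 : comm a b' = 0 := by
      have e : commL a b' = commL a (b : Octo) - t • commL a a := by
        rw [hb', map_sub, map_smul]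
      have e2 : comm a b' = comm a (b : Octo) - t • comm a a := e
      rw [e2, hcb, comm_self']
      simp
    have h2 : oinner a b' = 0 := by
      have : oinner a b' = oinner a (b : Octo) - t * oinner a a := by
        rw [hb', sub_eq_add_neg, oinner_add_right]
        have : oinner a (-(t • a)) = -(t * oinner a a) := by
          rw [← neg_smul]
          rw [oinner_smul_right]; ring
        rw [this]; ring
      rw [this, ht]
      field_simp
      ring
    have h3 : b'.1.re = 0 := by
      simp [hb', hbIm, haIm]
    have hb'0 : b' = 0 := by
      have hid := oinner_comm_self a b' haIm h3
      rw [h1, h2] at hid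
      have h0 : oinner (0 : Octo) (0 : Octo) = 0 := by
        rw [oinner_self]; change (0:ℝ)^2 + 0^2 + 0^2 + 0^2 + 0^2 + 0^2 + 0^2 + 0^2 = 0; norm_num
      rw [h0] at hid
      have : oinner a a * oinner b' b' = 0 := by linarith [hid]
      rcases mul_eq_zero.mp this with h | h
      · exact absurd h haa
      · exact oinner_self_eq_zero h
    have : (b : Octo) = t • a := by
      have := sub_eq_zero.mp hb'0
      simpa [hb'] using this
    rw [this]
    exact Submodule.smul_mem _ _ (Submodule.mem_span_singleton_self a)
  -- rank of the kernel
  have hkerrank : Module.finrank ℝ (LinearMap.ker f) ≤ 1 := by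
    have hmap : (LinearMap.ker f).map L.subtype ≤ Submodule.span ℝ {a} := by
      rintro x ⟨b, hb, rfl⟩
      exact hker b hb
    calc Module.finrank ℝ (LinearMap.ker f)
        = Module.finrank ℝ ((LinearMap.ker f).map L.subtype) :=
          (Submodule.finrank_map_subtype_eq L _).symm
      _ ≤ Module.finrank ℝ (Submodule.span ℝ {a}) := Submodule.finrank_mono hmap
      _ = 1 := finrank_span_singleton ha0
  -- range is contained in W
  have hrange : LinearMap.range f ≤ W := by
    rintro x ⟨b, rfl⟩
    rw [hWmem]
    refine ⟨comm_re a b, fun c hc => ?_⟩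
    exact hiso a haL b b.2 c hc
  have hrangerank : Module.finrank ℝ (LinearMap.range f) ≤ Module.finrank ℝ W :=
    Submodule.finrank_mono hrange
  have hrn := LinearMap.finrank_range_add_finrank_ker f
  omega

end
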